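/- arXiv:1608.00723 — 2 statements merged into one kernel-verified Lean document; each statement's English description precedes it below -/
import Mathlib

section
/- The set {η' ∈ Π(X) | ∀ σ ∈ Sym(X,η'), P = (T_σ)_* P} of equivalence relations on a finite set X under which a probability measure P on Y^X is exchangeable is closed under the join in the lattice of equivalence relations when P is a product measure; hence it has a greatest element (the relation of weak indistinguishability). -/
open MeasureTheory

/-- Auxiliary: the product measure is transformed into the product of the permuted
family by precomposition with a permutation. -/
lemma map_comp_perm_pi {X Y : Type*} [Fintype X] [MeasurableSpace Y]
    (p : X → Measure Y) [∀ x, IsProbabilityMeasure (p x)] (σ : Equiv.Perm X) :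
    Measure.map (fun f : X → Y => f ∘ σ) (Measure.pi p)
      = Measure.pi (fun x => p (σ x)) := by
  classical
  refine (Measure.pi_eq fun s hs => ?_).symm
  have hmeas : Measurable (fun f : X → Y => f ∘ σ) :=
    measurable_pi_lambda _ fun x => measurable_pi_apply (σ x)
  rw [Measure.map_apply hmeas (MeasurableSet.univ_pi hs)]
  have hpre : (fun f : X → Y => f ∘ σ) ⁻¹' Set.univ.pi s
      = Set.univ.pi (fun y => s (σ.symm y)) := by
    ext f
    simp only [Set.mem_preimage, Set.mem_pi, Set.mem_univ, forall_true_left,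
      Function.comp_apply]
    constructor
    · intro h y
      have := h (σ.symm y)
      simpa using this
    · intro h x
      have := h (σ x)
      simpa using this
  rw [hpre, Measure.pi_pi]
  exact Fintype.prod_equiv σ.symm _ _ (fun x => by simp)

/-- Auxiliary: product probability measures with equal products have equal factors. -/
lemma pi_eq_imp_factor {X Y : Type*} [Fintype X] [MeasurableSpace Y]
    (q r : X → Measure Y) [∀ x, IsProbabilityMeasure (q x)]
    [∀ x, IsProbabilityMeasure (r x)] (h : Measure.pi q = Measure.pi r) (x₀ : X) :
    q x₀ = r x₀ := by
  classical
  ext s hs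
  set F : X → Set Y := Function.update (fun _ => (Set.univ : Set Y)) x₀ s with hF
  have hFm : ∀ x, MeasurableSet (F x) := by
    intro x
    by_cases hx : x = x₀
    · subst hx; simpa [hF] using hs
    · simp [hF, Function.update_of_ne hx]
  have hcongr := congrArg (fun μ : Measure (X → Y) => μ (Set.univ.pi F)) h
  simp only [Measure.pi_pi] at hcongr
  have hq : ∏ x, q x (F x) = q x₀ s := by
    rw [Fintype.prod_eq_single x₀ (fun x hx => by simp [hF, Function.update_of_ne hx])]
    simp [hF]
  have hr : ∏ x, r x (F x) = r x₀ s := by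
    rw [Fintype.prod_eq_single x₀ (fun x hx => by simp [hF, Function.update_of_ne hx])]
    simp [hF]
  rw [hq, hr] at hcongr
  exact hcongr

/-- For a product probability measure P on Y^X, the set of equivalence relations
η' with P exchangeable under Sym(X,η') is closed under join; hence it has a
greatest element (the relation of weak indistinguishability). -/
theorem exchangeability_closed_under_join {X Y : Type*} [Fintype X] [MeasurableSpace Y]
    (p : X → Measure Y) [∀ x, IsProbabilityMeasure (p x)] (S : Set (Setoid X))
    (hS : S = {s : Setoid X | ∀ σ : Equiv.Perm X, (∀ x : X, s.r (σ x) x) →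
      Measure.map (fun f : X → Y => f ∘ σ) (Measure.pi p) = Measure.pi p}) :
    (∀ s ∈ S, ∀ t ∈ S, s ⊔ t ∈ S) ∧ ∃ m ∈ S, ∀ s ∈ S, s ≤ m := by
  classical
  have char : ∀ s : Setoid X, s ∈ S ↔ s ≤ Setoid.ker p := by
    intro s
    rw [hS]
    simp only [Set.mem_setOf_eq]
    constructor
    · intro hmem
      rw [Setoid.le_def]
      intro x y hxy
      let σ : Equiv.Perm X := Equiv.swap x y
      have hσ : ∀ z : X, s.r (σ z) z := by
        intro z
        by_cases hzx : z = x
        · subst hzx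
          simpa [σ, Equiv.swap_apply_left] using s.symm' hxy
        · by_cases hzy : z = y
          · subst hzy
            simpa [σ, Equiv.swap_apply_right] using hxy
          · simp [σ, Equiv.swap_apply_of_ne_of_ne hzx hzy]
      have hmap := hmem σ hσ
      rw [map_comp_perm_pi p σ] at hmap
      have := pi_eq_imp_factor (fun z => p (σ z)) p hmap x
      simpa [σ, Equiv.swap_apply_left] using this.symm
    · intro hle σ hσ
      have hpσ : (fun x => p (σ x)) = p := by
        funext x
        exact Setoid.le_def.mp hle (hσ x)
      rw [map_comp_perm_pi p σ, hpσ]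
  constructor
  · intro s hs t ht
    rw [char] at hs ht ⊢
    exact sup_le hs ht
  · refine ⟨Setoid.ker p, ?_, fun s hs => (char s).mp hs⟩
    exact (char _).mpr le_rfl
end

section
/- Let Y be a standard Borel space and n ∈ ℕ. Two functions f, f' : Fin n → Y satisfy ∑_i δ_{f(i)} = ∑_i δ_{f'(i)} (as measures on Y) if and only if there exists a permutation σ of Fin n with f = f' ∘ σ. Hence the map ξ(f) = ∑_i δ_{f(i)} induces a bijection between Y^n / (permutation action) and counting measures of total mass n on Y. -/
open MeasureTheory

lemma exists_perm_of_multiset_map_eq {α : Type*} :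
    ∀ {n : ℕ} (f f' : Fin n → α),
      Multiset.map f Finset.univ.val = Multiset.map f' Finset.univ.val →
      ∃ σ : Equiv.Perm (Fin n), f = f' ∘ σ := by
  intro n
  induction n with
  | zero =>
    intro f f' _
    exact ⟨Equiv.refl _, funext fun i => i.elim0⟩
  | succ n ih =>
    intro f f' h
    have hmem : f 0 ∈ Multiset.map f' Finset.univ.val := by
      rw [← h]
      exact Multiset.mem_map_of_mem f (Finset.mem_univ (0 : Fin (n + 1)))
    obtain ⟨j, -, hj⟩ := Multiset.mem_map.mp hmem
    set g' : Fin (n + 1) → α := f' ∘ Equiv.swap 0 j with hg'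
    have hswap : Multiset.map g' Finset.univ.val = Multiset.map f' Finset.univ.val := by
      have : Multiset.map (⇑(Equiv.swap 0 j)) Finset.univ.val = Finset.univ.val := by
        have := Finset.map_univ_equiv (Equiv.swap 0 j)
        calc Multiset.map (⇑(Equiv.swap 0 j)) Finset.univ.val
            = (Finset.univ.map (Equiv.swap 0 j).toEmbedding).val := rfl
          _ = Finset.univ.val := by rw [this]
      rw [hg']
      calc Multiset.map (f' ∘ ⇑(Equiv.swap 0 j)) Finset.univ.val
          = Multiset.map f' (Multiset.map (⇑(Equiv.swap 0 j)) Finset.univ.val) := by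
            rw [Multiset.map_map]
        _ = Multiset.map f' Finset.univ.val := by rw [this]
    have hg0 : g' 0 = f 0 := by
      simp [hg', hj]
    -- decompose universe of Fin (n+1)
    have huniv : (Finset.univ : Finset (Fin (n + 1))).val
        = 0 ::ₘ Multiset.map Fin.succ (Finset.univ : Finset (Fin n)).val := by
      rw [Fin.univ_succ, Finset.cons_val, Finset.map_val]
      rfl
    have htail : Multiset.map (f ∘ Fin.succ) Finset.univ.val
        = Multiset.map (g' ∘ Fin.succ) Finset.univ.val := by
      have h2 : Multiset.map f Finset.univ.val = Multiset.map g' Finset.univ.val := by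
        rw [hswap, h]
      rw [huniv] at h2
      simp only [Multiset.map_cons, Multiset.map_map, hg0] at h2
      exact (Multiset.cons_inj_right _).mp h2
    obtain ⟨τ, hτ⟩ := ih (f ∘ Fin.succ) (g' ∘ Fin.succ) htail
    refine ⟨(Equiv.Perm.decomposeFin.symm (0, τ)).trans (Equiv.swap 0 j), ?_⟩
    funext i
    simp only [Function.comp_apply, Equiv.trans_apply]
    refine Fin.cases ?_ (fun i => ?_) i
    · rw [Equiv.Perm.decomposeFin_symm_apply_zero]
      exact hg0.symm
    · rw [Equiv.Perm.decomposeFin_symm_apply_succ]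
      have := congrFun hτ i
      simpa [hg'] using this

/-- For a standard Borel space Y, ∑_i δ_{f(i)} = ∑_i δ_{f'(i)} iff f and f'
differ by a permutation of Fin n; hence ξ induces a bijection between
Y^n modulo permutations and counting measures of total mass n. -/
theorem dirac_sum_eq_iff_perm {Y : Type*} [MeasurableSpace Y] [StandardBorelSpace Y]
    (n : ℕ) :
    (∀ f f' : Fin n → Y,
      (∑ i : Fin n, Measure.dirac (f i)) = (∑ i : Fin n, Measure.dirac (f' i)) ↔
        ∃ σ : Equiv.Perm (Fin n), f = f' ∘ σ) ∧
    ∀ μ : Measure Y, (∃ g : Fin n → Y, μ = ∑ i : Fin n, Measure.dirac (g i)) →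
      ∃ f : Fin n → Y, (∑ i : Fin n, Measure.dirac (f i)) = μ := by
  classical
  constructor
  · intro f f'
    constructor
    · intro h
      apply exists_perm_of_multiset_map_eq
      apply Multiset.ext.mpr
      intro y
      have key : ∀ g : Fin n → Y,
          ((∑ i : Fin n, Measure.dirac (g i)) {y} : ENNReal)
            = (Multiset.count y (Multiset.map g Finset.univ.val) : ENNReal) := by
        intro g
        rw [Measure.finset_sum_apply]
        have : ∀ i : Fin n, Measure.dirac (g i) {y} = if g i = y then 1 else 0 := by
          intro i
          by_cases hi : g i = y
          · simp [hi, Measure.dirac_apply_of_mem]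
          · rw [Measure.dirac_apply' _ (measurableSet_singleton y)]
            simp [Set.indicator, hi]
        simp only [this]
        rw [Finset.sum_boole, Multiset.count_map]
        congr 1
        rw [Finset.card, Finset.filter_val]
        simp only [eq_comm]
      have := key f
      rw [h, key f'] at this
      exact_mod_cast Nat.cast_injective this.symm
    · rintro ⟨σ, rfl⟩
      simp only [Function.comp_apply]
      exact (Equiv.sum_comp σ (fun i => Measure.dirac (f' i))).symm ▸ rfl
  · rintro μ ⟨g, rfl⟩
    exact ⟨g, rfl⟩
end
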